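/- Let G be a very well-covered graph with 2n vertices. Then the set {x_i : i ∉ Ω_A} ∪ {y_i : i ∈ Ω_A} is a minimal vertex cover of G of size n, for every antichain A of the condensation 𝔡̂_G such that Ω_A contains no undirected edge of 𝔡_G. -/
import Mathlib


open Relation

/-- `C` is a vertex cover of `G`. -/
def IsVC {V : Type*} (G : SimpleGraph V) (C : Set V) : Prop :=
  ∀ ⦃u v : V⦄, G.Adj u v → u ∈ C ∨ v ∈ C

/-- `C` is a minimal vertex cover of `G`. -/
def IsMinVC {V : Type*} (G : SimpleGraph V) (C : Set V) : Prop :=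
  IsVC G C ∧ ∀ D : Set V, IsVC G D → D ⊆ C → D = C

/-- `S` is an independent set of `G`. -/
def IsIndep {V : Type*} (G : SimpleGraph V) (S : Set V) : Prop :=
  ∀ u ∈ S, ∀ v ∈ S, ¬ G.Adj u v

/-- `S` is a maximal independent set of `G`. -/
def IsMaxIndep {V : Type*} (G : SimpleGraph V) (S : Set V) : Prop :=
  IsIndep G S ∧ ∀ T : Set V, IsIndep G T → S ⊆ T → T = S

/-- `G` has no isolated vertices. -/
def NoIsolated {V : Type*} (G : SimpleGraph V) : Prop := ∀ v, ∃ w, G.Adj v w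

/-- The vertex set `{x_1,...,x_n} ∪ {y_1,...,y_n}`: `xv i = Sum.inl i`, `yv i = Sum.inr i`. -/
abbrev Vtx (n : ℕ) := Fin n ⊕ Fin n

def xv {n : ℕ} (i : Fin n) : Vtx n := Sum.inl i
def yv {n : ℕ} (i : Fin n) : Vtx n := Sum.inr i

/-- Condition (∗): X is a minimal vertex cover, Y is a maximal independent set,
and `x_i y_i` is an edge for every `i`. -/
def StarCond {n : ℕ} (G : SimpleGraph (Vtx n)) : Prop :=
  IsMinVC G (Set.range xv) ∧ IsMaxIndep G (Set.range yv) ∧ ∀ i, G.Adj (xv i) (yv i)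

/-- Condition (∗∗): `x_i y_j ∈ E(G)` implies `i ≤ j`. -/
def StarStarCond {n : ℕ} (G : SimpleGraph (Vtx n)) : Prop :=
  ∀ i j : Fin n, G.Adj (xv i) (yv j) → i ≤ j

/-- Condition (i): for distinct `i,j,k` and `z_i ∈ {x_i,y_i}`, if `z_i x_j` and `y_j x_k`
are edges then so is `z_i x_k`. -/
def CondI {n : ℕ} (G : SimpleGraph (Vtx n)) : Prop :=
  ∀ i j k : Fin n, i ≠ j → j ≠ k → i ≠ k →
    ∀ z ∈ ({xv i, yv i} : Set (Vtx n)),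
      G.Adj z (xv j) → G.Adj (yv j) (xv k) → G.Adj z (xv k)

/-- Condition (ii): `x_i y_j ∈ E(G)` implies `x_i x_j ∉ E(G)`. -/
def CondII {n : ℕ} (G : SimpleGraph (Vtx n)) : Prop :=
  ∀ i j : Fin n, G.Adj (xv i) (yv j) → ¬ G.Adj (xv i) (xv j)

/-- The minimum vertex cover size of `G` (the height of the edge ideal) is at least `n`. -/
def HeightN {n : ℕ} (G : SimpleGraph (Vtx n)) : Prop :=
  ∀ C : Finset (Vtx n), IsVC G ↑C → n ≤ C.card

/-- Directed edge `i → j` of the semidirected graph `𝔡_G`. -/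
def dirEdge {n : ℕ} (G : SimpleGraph (Vtx n)) (i j : Fin n) : Prop :=
  i ≠ j ∧ G.Adj (xv i) (yv j)

/-- Undirected edge `ij` of the semidirected graph `𝔡_G`. -/
def undirEdge {n : ℕ} (G : SimpleGraph (Vtx n)) (i j : Fin n) : Prop :=
  G.Adj (xv i) (xv j)
/-- The strong-connectivity setoid of a relation: mutual reachability. -/
def scSetoid {α : Type*} (r : α → α → Prop) : Setoid α where
  r i j := ReflTransGen r i j ∧ ReflTransGen r j i
  iseqv := ⟨fun _ => ⟨.refl, .refl⟩, fun h => ⟨h.2, h.1⟩,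
    fun h1 h2 => ⟨h1.1.trans h2.1, h2.2.trans h1.2⟩⟩

/-- The set of strong components of the semidirected graph `𝔡_G`. -/
def SC {n : ℕ} (G : SimpleGraph (Vtx n)) : Type :=
  Quotient (scSetoid (dirEdge G))

/-- The class of `i` in the strong components. -/
def scMk {n : ℕ} (G : SimpleGraph (Vtx n)) (i : Fin n) : SC G :=
  Quotient.mk (scSetoid (dirEdge G)) i

/-- Directed edge `a → b` of the condensation `𝔡̂_G`: the components are distinct and
there is a directed path in `𝔡_G` from a vertex of `Z_a` to a vertex of `Z_b`. -/
def condDir {n : ℕ} (G : SimpleGraph (Vtx n)) (a b : SC G) : Prop :=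
  a ≠ b ∧ ∃ i j : Fin n, scMk G i = a ∧ scMk G j = b ∧ ReflTransGen (dirEdge G) i j

/-- Undirected edge `ab` of the condensation `𝔡̂_G`. -/
def condUndir {n : ℕ} (G : SimpleGraph (Vtx n)) (a b : SC G) : Prop :=
  a ≠ b ∧ ∃ i j : Fin n, scMk G i = a ∧ scMk G j = b ∧ undirEdge G i j

/-- `A'` is an antichain of the condensation `𝔡̂_G`. -/
def AntichainC {n : ℕ} (G : SimpleGraph (Vtx n)) (A' : Finset (SC G)) : Prop :=
  ∀ a ∈ A', ∀ b ∈ A', a ≠ b → ¬ TransGen (condDir G) a b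

/-- `Ω_{A'}` for an antichain `A'` of the condensation: the union of the components `Z_b`
with `b ⪰ a` for some `a ∈ A'`. -/
def OmegaC {n : ℕ} (G : SimpleGraph (Vtx n)) (A' : Finset (SC G)) : Set (Fin n) :=
  {j | ∃ a ∈ A', ReflTransGen (condDir G) a (scMk G j)}

/-- The vertex set `{x_i : i ∉ Ω} ∪ {y_i : i ∈ Ω}`. -/
def coverOf {n : ℕ} (Ω : Set (Fin n)) : Set (Vtx n) :=
  {v | ∃ i : Fin n, (v = xv i ∧ i ∉ Ω) ∨ (v = yv i ∧ i ∈ Ω)}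

/-- Let `G` be a very well-covered graph with `2n` vertices (satisfying
(∗) and the unmixedness conditions (i),(ii)). For every antichain `A` of the condensation
`𝔡̂_G` such that `Ω_A` contains no undirected edge of `𝔡_G`, the set
`{x_i : i ∉ Ω_A} ∪ {y_i : i ∈ Ω_A}` is a minimal vertex cover of `G` of size `n`. -/
theorem antichain_gives_minimal_cover {n : ℕ} (G : SimpleGraph (Vtx n))
    (hiso : NoIsolated G) (hht : HeightN G) (hstar : StarCond G)
    (h1 : CondI G) (h2 : CondII G)
    (A' : Finset (SC G)) (hA : AntichainC G A')
    (hΩ : ∀ i ∈ OmegaC G A', ∀ j ∈ OmegaC G A', ¬ undirEdge G i j) :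
    IsMinVC G (coverOf (OmegaC G A')) ∧ (coverOf (OmegaC G A')).ncard = n := by

  classical
  set Ω := OmegaC G A' with hΩdef
  -- Ω is closed under directed edges
  have hclosed : ∀ i j : Fin n, i ∈ Ω → G.Adj (xv i) (yv j) → j ∈ Ω := by
    intro i j hi hadj
    by_cases hij : i = j
    · exact hij ▸ hi
    · obtain ⟨a, ha, hr⟩ := hi
      refine ⟨a, ha, ?_⟩
      by_cases hsc : scMk G i = scMk G j
      · exact hsc ▸ hr
      · exact hr.trans (ReflTransGen.single
          ⟨hsc, i, j, rfl, rfl, ReflTransGen.single ⟨hij, hadj⟩⟩)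
  -- description of the cover as a range
  set f : Fin n → Vtx n := fun i => if i ∈ Ω then yv i else xv i with hf
  have hCrange : coverOf Ω = Set.range f := by
    ext v
    constructor
    · rintro ⟨i, (⟨rfl, hi⟩ | ⟨rfl, hi⟩)⟩
      · exact ⟨i, by simp [hf, hi]⟩
      · exact ⟨i, by simp [hf, hi]⟩
    · rintro ⟨i, rfl⟩
      by_cases hi : i ∈ Ω
      · exact ⟨i, Or.inr ⟨by simp [hf, hi], hi⟩⟩
      · exact ⟨i, Or.inl ⟨by simp [hf, hi], hi⟩⟩
  have hfinj : Function.Injective f := by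
    intro i j hij
    by_cases hi : i ∈ Ω <;> by_cases hj : j ∈ Ω <;>
      simp [hf, hi, hj, xv, yv] at hij <;> exact hij
  have hcard : (coverOf Ω).ncard = n := by
    rw [hCrange, ← Set.image_univ, Set.ncard_image_of_injective _ hfinj,
      Set.ncard_univ, Nat.card_eq_fintype_card, Fintype.card_fin]
  -- membership helpers
  have hxmem : ∀ i : Fin n, i ∉ Ω → xv i ∈ coverOf Ω := fun i hi => ⟨i, Or.inl ⟨rfl, hi⟩⟩
  have hymem : ∀ i : Fin n, i ∈ Ω → yv i ∈ coverOf Ω := fun i hi => ⟨i, Or.inr ⟨rfl, hi⟩⟩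
  -- coverOf Ω is a vertex cover
  have hVC : IsVC G (coverOf Ω) := by
    rintro (i | i) (j | j) hadj
    · by_cases hi : i ∈ Ω
      · by_cases hj : j ∈ Ω
        · exact absurd hadj (hΩ i hi j hj)
        · exact Or.inr (hxmem j hj)
      · exact Or.inl (hxmem i hi)
    · by_cases hi : i ∈ Ω
      · exact Or.inr (hymem j (hclosed i j hi hadj))
      · exact Or.inl (hxmem i hi)
    · by_cases hj : j ∈ Ω
      · exact Or.inl (hymem i (hclosed j i hj hadj.symm))
      · exact Or.inr (hxmem j hj)
    · exact absurd hadj (hstar.2.1.1 (yv i) ⟨i, rfl⟩ (yv j) ⟨j, rfl⟩)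
  refine ⟨⟨hVC, ?_⟩, hcard⟩
  intro D hD hDC
  have hDfin : D.Finite := Set.toFinite D
  have hn : n ≤ D.ncard := by
    have := hht hDfin.toFinset (by rwa [Set.Finite.coe_toFinset])
    rwa [Set.ncard_eq_toFinset_card D hDfin]
  exact Set.eq_of_subset_of_ncard_le hDC (by rw [hcard]; exact hn) (Set.toFinite _)
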